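/- There are no real numbers $x, y, z$ simultaneously satisfying the four equations: (1) $\tfrac{1}{4}\cos(2x)(3+\cos(2y))\cos(2z) - \sin(2x)\cos(y)\sin(2z) = 0$, (2) $-\tfrac{\sqrt{3}}{2}\cos(2x)\sin^2(y) = 0$, (3) $-\tfrac{\sqrt{3}}{2}\cos(2z)\sin^2(y) = 0$, (4) $\tfrac{1}{4}(1+3\cos(2y)) = 0$. -/
import Mathlib


open Real

/-- There are no real numbers `x, y, z` satisfying simultaneously the four orthogonality
equations arising from flat 2-planes on the Wu manifold. -/
theorem stmt_1 :
    ¬ ∃ x y z : ℝ,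
      (1/4) * cos (2*x) * (3 + cos (2*y)) * cos (2*z) - sin (2*x) * cos y * sin (2*z) = 0 ∧
      -(Real.sqrt 3 / 2) * cos (2*x) * (sin y)^2 = 0 ∧
      -(Real.sqrt 3 / 2) * cos (2*z) * (sin y)^2 = 0 ∧
      (1/4) * (1 + 3 * cos (2*y)) = 0 := by
  rintro ⟨x, y, z, h1, h2, h3, h4⟩
  have hs3 : Real.sqrt 3 ≠ 0 := by positivity
  have hcy : cos (2*y) = -(1/3) := by linarith
  have hsy : (sin y)^2 = 2/3 := by
    have := Real.cos_two_mul y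
    have h2 : (sin y)^2 = 1 - (cos y)^2 := by
      have := Real.sin_sq_add_cos_sq y; linarith
    nlinarith
  have hcybsq : (cos y)^2 = 1/3 := by
    have := Real.sin_sq_add_cos_sq y; linarith
  have hcx : cos (2*x) = 0 := by
    have : Real.sqrt 3 * cos (2*x) = 0 := by nlinarith
    rcases mul_eq_zero.mp this with h | h
    · exact absurd h hs3
    · exact h
  have hcz : cos (2*z) = 0 := by
    have : Real.sqrt 3 * cos (2*z) = 0 := by nlinarith
    rcases mul_eq_zero.mp this with h | h
    · exact absurd h hs3
    · exact h
  have hsx : (sin (2*x))^2 = 1 := by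
    have := Real.sin_sq_add_cos_sq (2*x); nlinarith
  have hsz : (sin (2*z))^2 = 1 := by
    have := Real.sin_sq_add_cos_sq (2*z); nlinarith
  have h1' : sin (2*x) * cos y * sin (2*z) = 0 := by
    rw [hcx] at h1; linear_combination -h1
  rcases mul_eq_zero.mp h1' with h | h
  · rcases mul_eq_zero.mp h with h' | h'
    · rw [h'] at hsx; norm_num at hsx
    · rw [h'] at hcybsq; norm_num at hcybsq
  · rw [h] at hsz; norm_num at hsz
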